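/- Let G be an abelian subgroup of GL(n, K) (K = ℝ or ℂ) in which every element has a unique eigenvalue. Then there exists Q ∈ GL(n, K) such that Q⁻¹GQ is contained in 𝕋_n^*(K), the group of invertible lower triangular matrices with constant diagonal. -/

import Mathlib

open Polynomial

/-- `A` is lower triangular with all diagonal entries equal (the set `𝕋_n(K)`). -/
def LowerTriConstDiag {K : Type*} [Semiring K] {n : ℕ}
    (A : Matrix (Fin n) (Fin n) K) : Prop :=
  (∀ i j : Fin n, i < j → A i j = 0) ∧ ∀ i j : Fin n, A i i = A j j

lemma aux_prod_zero {R : Type*} [Ring R] [DecidableEq R] (l : List R)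
    (hc : ∀ x ∈ l, ∀ y ∈ l, x * y = y * x) (a : R) (n : ℕ)
    (ha : a ^ n = 0) (hcount : n ≤ l.count a) : l.prod = 0 := by
  have hperm : (l.filter (fun x => decide (x = a)) ++
      l.filter (fun x => !decide (x = a))).Perm l :=
    List.filter_append_perm _ l
  have hpw' : (l.filter (fun x => decide (x = a)) ++
      l.filter (fun x => !decide (x = a))).Pairwise Commute :=
    List.pairwise_of_forall_mem_list (by
      intro x hx y hy
      exact hc x (by
        rcases List.mem_append.mp hx with h | h <;> exact List.mem_of_mem_filter h) y (by
        rcases List.mem_append.mp hy with h | h <;> exact List.mem_of_mem_filter h))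
  rw [← hperm.prod_eq' hpw', List.prod_append, List.filter_eq (l := l) a, List.prod_replicate]
  have : a ^ l.count a = 0 := by
    obtain ⟨k, hk⟩ := Nat.exists_eq_add_of_le hcount
    rw [hk, pow_add, ha, zero_mul]
  rw [this, zero_mul]

lemma aux_pigeonhole {α : Type*} [DecidableEq α] (s : Finset α) (l : List α) (m : ℕ)
    (hmem : ∀ x ∈ l, x ∈ s) (hlen : s.card * m < l.length) :
    ∃ a ∈ s, m < l.count a := by
  by_contra h
  push_neg at h
  have h1 : l.length = ∑ a ∈ s, l.count a := by
    have h2 : ∑ a ∈ l.toFinset, l.count a = l.length := by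
      simpa using Multiset.toFinset_sum_count_eq (l : Multiset α)
    rw [← h2]
    refine Finset.sum_subset ?_ ?_
    · intro a hx
      exact hmem a (by simpa using hx)
    · intro x _ hx
      simp only [List.mem_toFinset] at hx
      exact List.count_eq_zero_of_not_mem hx
  have : l.length ≤ s.card * m := by
    rw [h1]
    calc ∑ a ∈ s, l.count a ≤ ∑ _a ∈ s, m := Finset.sum_le_sum (fun a ha => h a ha)
    _ = s.card * m := by rw [Finset.sum_const, smul_eq_mul]
  omega


open Submodule in
lemma aux_descent {K V : Type*} [Field K] [AddCommGroup V] [Module K V]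
    [FiniteDimensional K V] {ι : Type*} (f : ι → Module.End K V)
    (hcomm : ∀ i j, f i * f j = f j * f i) {n : ℕ}
    (hnil : ∀ i, f i ^ n = 0) (W : Submodule K V)
    (hW : W ≤ ⨆ i, Submodule.map (f i) W) : W = ⊥ := by
  classical
  rcases isEmpty_or_nonempty ι with hι | hι
  · simpa [iSup_of_empty] using hW
  by_cases hn : n = 0
  · have h1 : (1 : Module.End K V) = 0 := by
      have := hnil (Classical.arbitrary ι)
      rwa [hn, pow_zero] at this
    refine (Submodule.eq_bot_iff W).mpr fun x _ => ?_
    have : (1 : Module.End K V) x = (0 : Module.End K V) x := by rw [h1]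
    simpa using this
  have hfg : W.FG := IsNoetherian.noetherian W
  have hcpt := (Submodule.fg_iff_compact W).mp hfg
  obtain ⟨s, hs⟩ := CompleteLattice.IsCompactElement.exists_finset_of_le_iSup _ hcpt _ hW
  have key : ∀ t : ℕ, W ≤ ⨆ (l : List ι) (_ : l.length = t ∧ ∀ i ∈ l, i ∈ s),
      Submodule.map ((l.map f).prod) W := by
    intro t
    induction t with
    | zero =>
        have h0 : W = Submodule.map ((([] : List ι).map f).prod) W := by
          rw [List.map_nil, List.prod_nil]; exact (Submodule.map_id W).symm
        exact h0.le.trans (le_iSup_of_le [] (le_iSup_of_le ⟨rfl, by simp⟩ le_rfl))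
    | succ t ih =>
        refine le_trans ih ?_
        refine iSup_le fun l => iSup_le fun hl => ?_
        have step : Submodule.map ((l.map f).prod) W ≤
            ⨆ (i ∈ s), Submodule.map ((l.map f).prod) (Submodule.map (f i) W) := by
          refine le_trans (Submodule.map_mono hs) ?_
          rw [Submodule.map_iSup]
          refine iSup_mono fun i => ?_
          rw [Submodule.map_iSup]
        refine le_trans step ?_
        refine iSup_le fun i => iSup_le fun hi => ?_
        rw [← Submodule.map_comp]
        refine le_trans ?_ (le_iSup_of_le (l ++ [i]) (le_iSup_of_le ⟨by simp [hl.1], by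
          intro j hj
          rcases List.mem_append.mp hj with h | h
          · exact hl.2 j h
          · simpa using (List.mem_singleton.mp h ▸ hi)⟩ le_rfl))
        rw [show (((l ++ [i]).map f).prod) = ((l.map f).prod) ∘ₗ (f i) by
          simp [List.prod_append, Module.End.mul_eq_comp]]
  have hnpos : 0 < n := Nat.pos_of_ne_zero hn
  have hkey := key (s.card * (n - 1) + 1)
  refine le_bot_iff.mp (le_trans hkey ?_)
  refine iSup_le fun l => iSup_le fun hl => ?_
  obtain ⟨a, _, hcnt⟩ := aux_pigeonhole s l (n - 1) hl.2 (by omega)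
  have hprod : ((l.map f).prod) = 0 := by
    refine aux_prod_zero (l.map f) ?_ (f a) n (hnil a) ?_
    · intro x hx y hy
      obtain ⟨i, _, rfl⟩ := List.mem_map.mp hx
      obtain ⟨j, _, rfl⟩ := List.mem_map.mp hy
      exact hcomm i j
    · exact le_trans (by omega) (List.count_le_count_map (l := l) (f := f) (x := a))
  rw [hprod]
  rw [show Submodule.map (0 : Module.End K V) W = ⊥ from ?_]
  ext x; simp [Submodule.mem_map, eq_comm]


open Module Submodule in
lemma aux_rank_sup {K V : Type*} [Field K] [AddCommGroup V] [Module K V]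
    [FiniteDimensional K V] (U : Submodule K V) (x : V) (hxU : x ∉ U) :
    finrank K ↥(U ⊔ (K ∙ x)) = finrank K ↥U + 1 := by
  have hx0 : x ≠ 0 := fun h => hxU (h ▸ U.zero_mem)
  have hinf : U ⊓ (K ∙ x) = ⊥ := by
    refine (Submodule.eq_bot_iff _).mpr fun y ⟨hyU, hyx⟩ => ?_
    obtain ⟨c, rfl⟩ := Submodule.mem_span_singleton.mp hyx
    rcases eq_or_ne c 0 with rfl | hc
    · simp
    · exact absurd (by simpa [smul_smul, inv_mul_cancel₀ hc] using U.smul_mem c⁻¹ hyU) hxU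
  have h := Submodule.finrank_sup_add_finrank_inf_eq U (K ∙ x)
  rw [hinf, finrank_span_singleton hx0] at h
  simpa using h

open Module Submodule in
lemma aux_grow {K V : Type*} [Field K] [AddCommGroup V] [Module K V]
    [FiniteDimensional K V] :
    ∀ (k : ℕ) (U W : Submodule K V), U ≤ W → finrank K U + k ≤ finrank K W →
    ∃ W', U ≤ W' ∧ W' ≤ W ∧ finrank K W' = finrank K U + k := by
  intro k
  induction k with
  | zero => exact fun U W hUW _ => ⟨U, le_rfl, hUW, by omega⟩
  | succ k ih =>
      intro U W hUW hrk
      have hne : U ≠ W := by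
        intro h; rw [h] at hrk; omega
      obtain ⟨x, hxW, hxU⟩ := SetLike.exists_of_lt (lt_of_le_of_ne hUW hne)
      have hx0 : x ≠ 0 := fun h => hxU (h ▸ U.zero_mem)
      have hinf : U ⊓ (K ∙ x) = ⊥ := by
        refine (Submodule.eq_bot_iff _).mpr fun y ⟨hyU, hyx⟩ => ?_
        obtain ⟨c, rfl⟩ := Submodule.mem_span_singleton.mp hyx
        rcases eq_or_ne c 0 with rfl | hc
        · simp
        · exact absurd (by simpa [smul_smul, inv_mul_cancel₀ hc] using U.smul_mem c⁻¹ hyU) hxU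
      have hrank : finrank K ↥(U ⊔ (K ∙ x)) = finrank K U + 1 := by
        have := Submodule.finrank_sup_add_finrank_inf_eq U (K ∙ x)
        rw [hinf, finrank_span_singleton hx0] at this
        simpa using this
      have hle : U ⊔ (K ∙ x) ≤ W :=
        sup_le hUW ((Submodule.span_singleton_le_iff_mem x W).mpr hxW)
      obtain ⟨W', h1, h2, h3⟩ := ih (U ⊔ (K ∙ x)) W hle (by omega)
      exact ⟨W', le_trans le_sup_left h1, h2, by omega⟩



set_option maxHeartbeats 2000000 in
open Matrix Module Submodule in
/-- Lemma 2.2: an abelian subgroup of `GL(n, 𝕂)` (𝕂 = ℝ or ℂ) all of whose elements have a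
unique eigenvalue is simultaneously conjugate into `𝕋_n^*(𝕂)`. -/
theorem abelian_unique_eigenvalue_triangularizable
    {𝕂 : Type*} [RCLike 𝕂] (n : ℕ)
    (G : Subgroup (Matrix.GeneralLinearGroup (Fin n) 𝕂))
    (hab : ∀ A ∈ G, ∀ B ∈ G, A * B = B * A)
    (heig : ∀ A ∈ G, ∃ μ : 𝕂,
      (A : Matrix (Fin n) (Fin n) 𝕂).charpoly = (X - C μ) ^ n) :
    ∃ Q : Matrix.GeneralLinearGroup (Fin n) 𝕂, ∀ A ∈ G,
      LowerTriConstDiag ((Q⁻¹ * A * Q : Matrix.GeneralLinearGroup (Fin n) 𝕂) :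
        Matrix (Fin n) (Fin n) 𝕂) ∧
      ∀ i, ((Q⁻¹ * A * Q : Matrix.GeneralLinearGroup (Fin n) 𝕂) :
        Matrix (Fin n) (Fin n) 𝕂) i i ≠ 0 := by
  classical
  rcases Nat.eq_zero_or_pos n with hn | hn
  · subst hn
    exact ⟨1, fun A _ => ⟨⟨fun i => i.elim0, fun i => i.elim0⟩, fun i => i.elim0⟩⟩
  -- eigenvalues and nilpotent parts
  let μ : G → 𝕂 := fun A => (heig ↑A A.2).choose
  have hμ : ∀ A : G, ((A : Matrix.GeneralLinearGroup (Fin n) 𝕂) :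
      Matrix (Fin n) (Fin n) 𝕂).charpoly = (X - C (μ A)) ^ n :=
    fun A => (heig ↑A A.2).choose_spec
  let Am : G → Matrix (Fin n) (Fin n) 𝕂 := fun A => ((A : Matrix.GeneralLinearGroup (Fin n) 𝕂) :
      Matrix (Fin n) (Fin n) 𝕂)
  let Nm : G → Matrix (Fin n) (Fin n) 𝕂 := fun A => Am A - μ A • 1
  have hNnil : ∀ A : G, Nm A ^ n = 0 := by
    intro A
    have hCH := Matrix.aeval_self_charpoly (Am A)
    rw [hμ A, map_pow, map_sub, aeval_X, aeval_C] at hCH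
    simpa [Nm, Algebra.algebraMap_eq_smul_one] using hCH
  have hGcomm : ∀ A B : G, Am A * Am B = Am B * Am A := by
    intro A B
    have h := hab ↑A A.2 ↑B B.2
    exact congrArg Units.val h
  have hNcomm : ∀ A B : G, Nm A * Nm B = Nm B * Nm A := by
    intro A B
    have h : Commute (Am A) (Am B) := hGcomm A B
    exact ((h.sub_left ((Commute.one_left (Am B)).smul_left (μ A))).sub_right
      ((Commute.one_right (Am A - μ A • 1)).smul_right (μ B)))
  -- endomorphisms
  let f : G → Module.End 𝕂 (Fin n → 𝕂) := fun A => (Nm A).mulVecLin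
  have hfcomm : ∀ A B, f A * f B = f B * f A := by
    intro A B
    show (Nm A).mulVecLin ∘ₗ (Nm B).mulVecLin = (Nm B).mulVecLin ∘ₗ (Nm A).mulVecLin
    rw [← Matrix.mulVecLin_mul, ← Matrix.mulVecLin_mul, hNcomm]
  have hfpow : ∀ (A : G) (k : ℕ), f A ^ k = (Nm A ^ k).mulVecLin := by
    intro A k
    induction k with
    | zero => rw [pow_zero, pow_zero, Matrix.mulVecLin_one]; rfl
    | succ k ih => rw [pow_succ, pow_succ, ih, Matrix.mulVecLin_mul]; rfl
  have hfnil : ∀ A, f A ^ n = 0 := by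
    intro A
    rw [hfpow, hNnil, Matrix.mulVecLin_zero]
  let 𝒩 : Submodule 𝕂 (Fin n → 𝕂) → Submodule 𝕂 (Fin n → 𝕂) :=
    fun W => ⨆ A : G, Submodule.map (f A) W
  have h𝒩mono : Monotone 𝒩 :=
    fun W W' h => iSup_mono fun A => Submodule.map_mono h
  -- step existence
  have hstep : ∀ W : Submodule 𝕂 (Fin n → 𝕂), 𝒩 W ≤ W → W ≠ ⊥ →
      ∃ W', 𝒩 W ≤ W' ∧ W' ≤ W ∧ finrank 𝕂 W' + 1 = finrank 𝕂 W := by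
    intro W hle hne
    have hstrict : 𝒩 W ≠ W := by
      intro h
      exact hne (aux_descent f hfcomm hfnil W (le_of_eq h.symm))
    have hlt : finrank 𝕂 (𝒩 W) < finrank 𝕂 W :=
      Submodule.finrank_lt_finrank_of_lt (lt_of_le_of_ne hle hstrict)
    obtain ⟨W', h1, h2, h3⟩ := aux_grow (finrank 𝕂 W - 1 - finrank 𝕂 (𝒩 W)) (𝒩 W) W hle (by omega)
    exact ⟨W', h1, h2, by omega⟩
  -- the flag
  let Vc : ℕ → Submodule 𝕂 (Fin n → 𝕂) := fun j => Nat.rec (motive := fun _ => Submodule 𝕂 (Fin n → 𝕂)) ⊤ (fun _ Wj =>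
    if h : ∃ W', 𝒩 Wj ≤ W' ∧ W' ≤ Wj ∧ finrank 𝕂 W' + 1 = finrank 𝕂 Wj
    then h.choose else ⊥) j
  have hV0 : Vc 0 = ⊤ := rfl
  have main : ∀ j : ℕ, j ≤ n → finrank 𝕂 (Vc j) = n - j ∧ 𝒩 (Vc j) ≤ Vc j := by
    intro j
    induction j with
    | zero => exact fun _ => ⟨by rw [hV0, finrank_top, Module.finrank_fin_fun]; omega, le_top⟩
    | succ j ih =>
        intro hj
        obtain ⟨hrk, hinv⟩ := ih (by omega)
        have hne : Vc j ≠ ⊥ := by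
          intro h
          rw [h, finrank_bot] at hrk
          omega
        have hex := hstep (Vc j) hinv hne
        have hVs : Vc (j+1) = hex.choose := dif_pos hex
        obtain ⟨hs1, hs2, hs3⟩ := hex.choose_spec
        constructor
        · rw [hVs]; omega
        · rw [hVs]; exact le_trans (h𝒩mono hs2) hs1
  have hVstep : ∀ j : ℕ, j < n → 𝒩 (Vc j) ≤ Vc (j+1) ∧ Vc (j+1) ≤ Vc j ∧
      finrank 𝕂 (Vc (j+1)) + 1 = finrank 𝕂 (Vc j) := by
    intro j hj
    obtain ⟨hrk, hinv⟩ := main j (by omega)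
    have hne : Vc j ≠ ⊥ := by
      intro h
      rw [h, finrank_bot] at hrk
      omega
    have hex := hstep (Vc j) hinv hne
    have hVs : Vc (j+1) = hex.choose := dif_pos hex
    obtain ⟨hs1, hs2, hs3⟩ := hex.choose_spec
    exact ⟨hVs ▸ hs1, hVs ▸ hs2, hVs ▸ hs3⟩
  have hVn : Vc n = ⊥ := by
    have := (main n le_rfl).1
    rw [Nat.sub_self] at this
    exact (Submodule.finrank_eq_zero).mp this
  -- pick vectors witnessing each step of the flag
  have hxex : ∀ j : Fin n, ∃ v : Fin n → 𝕂, v ∈ Vc ↑j ∧ v ∉ Vc (↑j + 1) := by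
    intro j
    have h3 := (hVstep ↑j j.isLt).2.2
    by_contra h
    push_neg at h
    have hle : Vc ↑j ≤ Vc (↑j + 1) := fun v hv => h v hv
    have := Submodule.finrank_mono hle
    omega
  choose x hx1 hx2 using hxex
  have hsup : ∀ j : Fin n, Vc ↑j = Vc (↑j + 1) ⊔ (𝕂 ∙ x j) := by
    intro j
    have hle : Vc (↑j + 1) ⊔ (𝕂 ∙ x j) ≤ Vc ↑j :=
      sup_le (hVstep ↑j j.isLt).2.1 ((Submodule.span_singleton_le_iff_mem _ _).mpr (hx1 j))
    refine (Submodule.eq_of_le_of_finrank_eq hle ?_).symm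
    rw [aux_rank_sup _ _ (hx2 j)]
    exact (hVstep ↑j j.isLt).2.2
  -- the flag is spanned by tails of x
  have hspan : ∀ k j : ℕ, j + k = n → Vc j = span 𝕂 (x '' {i : Fin n | j ≤ ↑i}) := by
    intro k
    induction k with
    | zero =>
        intro j hj
        have hj' : j = n := by omega
        have hset : {i : Fin n | j ≤ ↑i} = (∅ : Set (Fin n)) := by
          ext i
          simp only [Set.mem_setOf_eq, Set.mem_empty_iff_false, iff_false]
          have := i.isLt
          omega
        rw [hset, hj', hVn]
        simp
    | succ k ih =>
        intro j hj
        have hjn : j < n := by omega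
        have hx : x ⟨j, hjn⟩ ∈ Vc ↑(⟨j, hjn⟩ : Fin n) := hx1 _
        have hrec := ih (j+1) (by omega)
        have hset : {i : Fin n | j ≤ ↑i} = insert (⟨j, hjn⟩ : Fin n) {i : Fin n | j + 1 ≤ ↑i} := by
          ext i
          simp only [Set.mem_setOf_eq, Set.mem_insert_iff]
          constructor
          · intro hi
            rcases eq_or_lt_of_le hi with h | h
            · left; apply Fin.ext; simpa using h.symm
            · right; omega
          · rintro (rfl | hi)
            · rfl
            · omega
        rw [hset, Set.image_insert_eq, Submodule.span_insert, ← hrec, sup_comm]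
        exact hsup ⟨j, hjn⟩
  -- the basis
  have htop : ⊤ ≤ span 𝕂 (Set.range x) := by
    have h0 := hspan n 0 (by omega)
    have huniv : {i : Fin n | (0:ℕ) ≤ ↑i} = Set.univ := by ext i; simp
    rw [huniv, Set.image_univ] at h0
    rw [← h0]
    exact le_of_eq hV0.symm
  let b : Basis (Fin n) 𝕂 (Fin n → 𝕂) :=
    basisOfTopLeSpanOfCardEqFinrank x htop (by simp [Module.finrank_fin_fun])
  have hb : ⇑b = x := coe_basisOfTopLeSpanOfCardEqFinrank x htop _
  let P : Basis (Fin n) 𝕂 (Fin n → 𝕂) := Pi.basisFun 𝕂 (Fin n)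
  let Qm : Matrix (Fin n) (Fin n) 𝕂 := P.toMatrix ⇑b
  let Qinv : Matrix (Fin n) (Fin n) 𝕂 := b.toMatrix ⇑P
  have hQ1 : Qm * Qinv = 1 := P.toMatrix_mul_toMatrix_flip b
  have hQ2 : Qinv * Qm = 1 := b.toMatrix_mul_toMatrix_flip P
  refine ⟨⟨Qm, Qinv, hQ1, hQ2⟩, ?_⟩
  intro A0 hA0
  set A : G := ⟨A0, hA0⟩ with hA
  set Q : Matrix.GeneralLinearGroup (Fin n) 𝕂 := ⟨Qm, Qinv, hQ1, hQ2⟩ with hQ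
  -- value of the conjugated matrix
  have hval : ((Q⁻¹ * A0 * Q : Matrix.GeneralLinearGroup (Fin n) 𝕂) :
      Matrix (Fin n) (Fin n) 𝕂) = Qinv * Am A * Qm := by
    rw [Units.val_mul, Units.val_mul]
    rfl
  have hconj : Qinv * Am A * Qm = LinearMap.toMatrix b b (Matrix.toLin P P (Am A)) := by
    have h := basis_toMatrix_mul_linearMap_toMatrix_mul_basis_toMatrix
      (b := b) (b' := P) (c := b) (c' := P) (f := Matrix.toLin P P (Am A))
    rw [LinearMap.toMatrix_toLin] at h
    exact h
  -- the action of A on basis vectors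
  have hact : ∀ j : Fin n, (Matrix.toLin P P (Am A)) (b j) = μ A • b j + (f A) (b j) := by
    intro j
    rw [Matrix.toLin_eq_toLin', Matrix.toLin'_apply]
    show (Am A) *ᵥ (b j) = _
    have : Am A = μ A • (1 : Matrix (Fin n) (Fin n) 𝕂) + Nm A := by
      simp [Nm]
    rw [this, Matrix.add_mulVec, Matrix.smul_mulVec, Matrix.one_mulVec]
    rfl
  -- vanishing of low coordinates of the nilpotent part
  have hrepr0 : ∀ j i : Fin n, ¬ j < i → b.repr ((f A) (b j)) i = 0 := by
    intro j i hij
    have h1 : b j ∈ Vc ↑j := by rw [hb]; exact hx1 j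
    have h2 : (f A) (b j) ∈ 𝒩 (Vc ↑j) := by
      refine Submodule.mem_iSup_of_mem A ?_
      exact Submodule.mem_map_of_mem h1
    have h3 : (f A) (b j) ∈ Vc (↑j + 1) := (hVstep ↑j j.isLt).1 h2
    have h4 := hspan (n - (↑j + 1)) (↑j + 1) (by have := j.isLt; omega)
    rw [h4, ← hb] at h3
    have h5 := (Basis.mem_span_image (b := b)).mp h3
    by_contra h0
    have h6 : i ∈ (b.repr ((f A) (b j))).support := Finsupp.mem_support_iff.mpr h0
    have h7 : (↑j : ℕ) + 1 ≤ ↑i := h5 h6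
    exact hij (by omega)
  -- entries
  have hentry : ∀ i j : Fin n, ((Q⁻¹ * A0 * Q : Matrix.GeneralLinearGroup (Fin n) 𝕂) :
      Matrix (Fin n) (Fin n) 𝕂) i j
      = μ A * (if i = j then 1 else 0) + b.repr ((f A) (b j)) i := by
    intro i j
    rw [hval, hconj, LinearMap.toMatrix_apply, hact j, map_add, _root_.map_smul]
    simp [Basis.repr_self, Finsupp.single_apply, eq_comm]
  -- nonvanishing of the eigenvalue
  have hμ0 : μ A ≠ 0 := by
    have hdet := Matrix.det_eq_sign_charpoly_coeff (Am A)
    rw [hμ A, Polynomial.coeff_zero_eq_eval_zero] at hdet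
    have : ((X - C (μ A)) ^ n).eval 0 = (-μ A) ^ n := by
      simp [Polynomial.eval_pow]
    rw [this] at hdet
    have hdet2 : (Am A).det = μ A ^ n := by
      rw [hdet]
      simp only [Fintype.card_fin]
      rw [← mul_pow, neg_mul_neg, one_mul]
    have hunit : IsUnit (Am A).det := by
      refine (Matrix.isUnit_iff_isUnit_det _).mp ?_
      exact ⟨A0, rfl⟩
    rw [hdet2] at hunit
    intro h
    rw [h, zero_pow (by omega)] at hunit
    exact (by simpa using hunit : False)
  refine ⟨⟨?_, ?_⟩, ?_⟩
  · intro i j hij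
    rw [hentry i j, hrepr0 j i (by exact fun h => absurd (lt_trans hij h) (lt_irrefl _))]
    simp [Fin.ne_of_lt hij]
  · intro i j
    rw [hentry i i, hentry j j, hrepr0 i i (lt_irrefl i), hrepr0 j j (lt_irrefl j)]
    simp
  · intro i
    rw [hentry i i, hrepr0 i i (lt_irrefl i)]
    simpa using hμ0
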